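/- If m is a supermodular game, then every marginal vector x^m(π,·), for any enumeration π of N, belongs to the core C(m). -/

import Mathlib

open Finset

/-- A game is supermodular if `m A + m B ≤ m (A ∪ B) + m (A ∩ B)` for all `A, B`. -/
def Supermod {N : Type*} [DecidableEq N] (m : Finset N → ℝ) : Prop :=
  ∀ A B : Finset N, m A + m B ≤ m (A ∪ B) + m (A ∩ B)

/-- The initial segment `{π 0, ..., π (k-1)}` of the enumeration `π`. -/
def seg {N : Type*} [Fintype N] [DecidableEq N] (π : Fin (Fintype.card N) ≃ N) (k : ℕ) :
    Finset N :=
  (Finset.univ.filter (fun j : Fin (Fintype.card N) => (j : ℕ) < k)).image π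

/-- The marginal vector `x^m(π,·)` of the game `m` w.r.t. the enumeration `π`. -/
def marg {N : Type*} [Fintype N] [DecidableEq N] (m : Finset N → ℝ)
    (π : Fin (Fintype.card N) ≃ N) (i : N) : ℝ :=
  m (seg π ((π.symm i : ℕ) + 1)) - m (seg π ((π.symm i : ℕ)))

/-- The core of a game. -/
def core {N : Type*} [Fintype N] [DecidableEq N] (m : Finset N → ℝ) : Set (N → ℝ) :=
  {v | ∑ i, v i = m Finset.univ ∧ ∀ S : Finset N, m S ≤ ∑ i ∈ S, v i}

section aux
variable {N : Type*} [Fintype N] [DecidableEq N] (π : Fin (Fintype.card N) ≃ N)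

lemma mem_seg {a : N} {k : ℕ} : a ∈ seg π k ↔ ((π.symm a : ℕ) < k) := by
  simp only [seg, mem_image, mem_filter, mem_univ, true_and]
  constructor
  · rintro ⟨j, hj, rfl⟩; simpa using hj
  · intro h; exact ⟨π.symm a, h, by simp⟩

lemma seg_succ {k : ℕ} (h : k < Fintype.card N) :
    seg π (k + 1) = insert (π ⟨k, h⟩) (seg π k) := by
  ext a
  simp only [mem_seg, mem_insert, Nat.lt_succ_iff_lt_or_eq]
  constructor
  · rintro (h1 | h1)
    · exact Or.inr h1
    · left; have hh : π.symm a = ⟨k, h⟩ := Fin.ext h1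
      rw [← hh]; simp
  · rintro (rfl | h1)
    · right; simp
    · exact Or.inl h1

lemma not_mem_seg {k : ℕ} (h : k < Fintype.card N) : π ⟨k, h⟩ ∉ seg π k := by
  simp [mem_seg]

lemma seg_card : seg π (Fintype.card N) = Finset.univ := by
  ext a; simp [mem_seg, (π.symm a).isLt]

lemma marg_apply {k : ℕ} (h : k < Fintype.card N) (m : Finset N → ℝ) :
    marg m π (π ⟨k, h⟩) = m (seg π (k + 1)) - m (seg π k) := by
  simp [marg]

lemma seg_stable {k : ℕ} (h : Fintype.card N ≤ k) : seg π k = Finset.univ := by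
  ext a; simp only [mem_seg, mem_univ, iff_true]
  exact lt_of_lt_of_le (π.symm a).isLt h

lemma sum_marg_seg (m : Finset N → ℝ) (hm : m ∅ = 0) (k : ℕ) :
    ∑ i ∈ seg π k, marg m π i = m (seg π k) := by
  induction k with
  | zero => simpa [seg] using hm.symm
  | succ k ih =>
    by_cases h : k < Fintype.card N
    · rw [seg_succ π h, Finset.sum_insert (not_mem_seg π h), ih, marg_apply π h,
        ← seg_succ π h]
      ring
    · push_neg at h
      rw [seg_stable π h, seg_stable π (le_trans h (Nat.le_succ k))] at *
      exact ih

lemma core_ineq (m : Finset N → ℝ) (hm : m ∅ = 0) (hsup : Supermod m)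
    (S : Finset N) (k : ℕ) :
    m (S ∩ seg π k) ≤ ∑ i ∈ S ∩ seg π k, marg m π i := by
  induction k with
  | zero => simp [seg, hm]
  | succ k ih =>
    by_cases h : k < Fintype.card N
    · set i := π ⟨k, h⟩
      by_cases hiS : i ∈ S
      · have hins : S ∩ seg π (k + 1) = insert i (S ∩ seg π k) := by
          rw [seg_succ π h, Finset.inter_insert_of_mem hiS]
        have hni : i ∉ S ∩ seg π k := fun hc => not_mem_seg π h (Finset.mem_inter.1 hc).2
        rw [hins, Finset.sum_insert hni]
        have key := hsup (insert i (S ∩ seg π k)) (seg π k)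
        have hu : insert i (S ∩ seg π k) ∪ seg π k = seg π (k + 1) := by
          rw [seg_succ π h]
          ext a
          simp only [mem_union, mem_insert, mem_inter]
          tauto
        have hi : insert i (S ∩ seg π k) ∩ seg π k = S ∩ seg π k := by
          ext a
          simp only [mem_inter, mem_insert]
          constructor
          · rintro ⟨rfl | h1, h2⟩
            · exact absurd h2 (not_mem_seg π h)
            · exact h1
          · intro h1; exact ⟨Or.inr h1, h1.2⟩
        rw [hu, hi] at key
        have : m (insert i (S ∩ seg π k)) ≤
            (m (seg π (k + 1)) - m (seg π k)) + m (S ∩ seg π k) := by linarith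
        calc m (insert i (S ∩ seg π k)) ≤ (m (seg π (k+1)) - m (seg π k)) + m (S ∩ seg π k) := this
          _ ≤ marg m π i + ∑ j ∈ S ∩ seg π k, marg m π j := by
              rw [marg_apply π h]; exact add_le_add_right ih _
      · have : S ∩ seg π (k + 1) = S ∩ seg π k := by
          rw [seg_succ π h, Finset.inter_insert_of_notMem hiS]
        rw [this]; exact ih
    · push_neg at h
      rw [seg_stable π h, seg_stable π (le_trans h (Nat.le_succ k))] at *
      exact ih

end aux

theorem stmt4 {N : Type*} [Fintype N] [DecidableEq N]
    (m : Finset N → ℝ) (hm : m ∅ = 0) (hsup : Supermod m)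
    (π : Fin (Fintype.card N) ≃ N) :
    marg m π ∈ core m := by
  constructor
  · have := sum_marg_seg π m hm (Fintype.card N)
    rwa [seg_card] at this
  · intro S
    have := core_ineq π m hm hsup S (Fintype.card N)
    rwa [seg_card, Finset.inter_univ] at this
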